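/- Let K be a field, let {e_i}_{i=1}^∞ be a K-basis of an infinite-dimensional affine K-algebra R and let S = {r_1, r_2, …, r_s} ⊆ R. Suppose that for every l and every l-tuple {e_{i_1}, …, e_{i_l}} of distinct basis elements, the K-linear span of the vectors {e_{i_t}·r_j : 1 ≤ t ≤ l, 1 ≤ j ≤ s} has dimension at least 2l. Then there is a partition {e_i}_{i=1}^∞ = A_1 ∪ A_2 ∪ ⋯ ∪ A_m and elements g_1, h_1, g_2, h_2, …, g_m, h_m ∈ S such that the sets A_1g_1, A_1h_1, A_2g_2, A_2h_2, …, A_mg_m, A_mh_m are mutually independent, i.e. the combined family of all elements a·g_j and a·h_j (a ∈ A_j, 1 ≤ j ≤ m) is linearly independent over K; here Ag = {ag : a ∈ A}. -/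
import Mathlib


open Module Submodule

section Rado


lemma rado {K V : Type*} [Field K] [AddCommGroup V] [Module K V]
    {ι : Type*} [Fintype ι] [DecidableEq ι] [DecidableEq V] (X : ι → Finset V)
    (hX : ∀ t : Finset ι, t.card ≤ finrank K (span K ((t.biUnion X : Finset V) : Set V))) :
    ∃ x : ι → V, (∀ i, x i ∈ X i) ∧ LinearIndependent K x := by
  generalize hN : (∑ i, (X i).card) = N
  induction N using Nat.strong_induction_on generalizing X with
  | _ N IH =>
  subst hN
  by_cases hbig : ∃ i₀, 2 ≤ (X i₀).card
  · obtain ⟨i₀, hi₀⟩ := hbig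
    obtain ⟨x, hx, y, hy, hxy⟩ := Finset.one_lt_card.mp hi₀
    -- try removing x, or removing y
    have key : ∀ z ∈ X i₀, (∀ t : Finset ι,
        t.card ≤ finrank K (span K ((t.biUnion (Function.update X i₀ ((X i₀).erase z)) : Finset V) : Set V))) →
        ∃ x : ι → V, (∀ i, x i ∈ X i) ∧ LinearIndependent K x := by
      intro z hz h'
      have hlt : (∑ i, ((Function.update X i₀ ((X i₀).erase z)) i).card) < ∑ i, (X i).card := by
        apply Finset.sum_lt_sum
        · intro i _
          by_cases hii : i = i₀
          · subst hii
            rw [Function.update_self]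
            exact Finset.card_le_card (Finset.erase_subset _ _)
          · rw [Function.update_of_ne hii]
        · refine ⟨i₀, Finset.mem_univ _, ?_⟩
          rw [Function.update_self, Finset.card_erase_of_mem hz]
          omega
      obtain ⟨w, hw, hli⟩ := IH _ hlt _ h' rfl
      refine ⟨w, ?_, hli⟩
      intro i
      by_cases hii : i = i₀
      · subst hii
        have hwi := hw i
        rw [Function.update_self] at hwi
        exact Finset.erase_subset _ _ hwi
      · have hwi := hw i
        rwa [Function.update_of_ne hii] at hwi
    by_cases hcx : ∀ t : Finset ι, t.card ≤ finrank K
        (span K ((t.biUnion (Function.update X i₀ ((X i₀).erase x)) : Finset V) : Set V))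
    · exact key x hx hcx
    by_cases hcy : ∀ t : Finset ι, t.card ≤ finrank K
        (span K ((t.biUnion (Function.update X i₀ ((X i₀).erase y)) : Finset V) : Set V))
    · exact key y hy hcy
    exfalso
    push_neg at hcx hcy
    obtain ⟨tx, htx⟩ := hcx
    obtain ⟨ty, hty⟩ := hcy
    have hitx : i₀ ∈ tx := by
      by_contra h
      have heq : tx.biUnion (Function.update X i₀ ((X i₀).erase x)) = tx.biUnion X :=
        Finset.biUnion_congr rfl (fun i hi => Function.update_of_ne (by rintro rfl; exact h hi) _ _)
      rw [heq] at htx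
      exact absurd (hX tx) (not_le.mpr htx)
    have hity : i₀ ∈ ty := by
      by_contra h
      have heq : ty.biUnion (Function.update X i₀ ((X i₀).erase y)) = ty.biUnion X :=
        Finset.biUnion_congr rfl (fun i hi => Function.update_of_ne (by rintro rfl; exact h hi) _ _)
      rw [heq] at hty
      exact absurd (hX ty) (not_le.mpr hty)
    set sx := tx.erase i₀ with hsx
    set sy := ty.erase i₀ with hsy
    have hbx : tx.biUnion (Function.update X i₀ ((X i₀).erase x))
        = (X i₀).erase x ∪ sx.biUnion X := by
      conv_lhs => rw [← Finset.insert_erase hitx]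
      rw [Finset.biUnion_insert, Function.update_self]
      congr 1
      exact Finset.biUnion_congr rfl
        (fun i hi => Function.update_of_ne (Finset.ne_of_mem_erase hi) _ _)
    have hby : ty.biUnion (Function.update X i₀ ((X i₀).erase y))
        = (X i₀).erase y ∪ sy.biUnion X := by
      conv_lhs => rw [← Finset.insert_erase hity]
      rw [Finset.biUnion_insert, Function.update_self]
      congr 1
      exact Finset.biUnion_congr rfl
        (fun i hi => Function.update_of_ne (Finset.ne_of_mem_erase hi) _ _)
    rw [hbx] at htx
    rw [hby] at hty
    have hcsx : sx.card = tx.card - 1 := by rw [hsx]; exact Finset.card_erase_of_mem hitx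
    have hcsy : sy.card = ty.card - 1 := by rw [hsy]; exact Finset.card_erase_of_mem hity
    have hpx : 0 < tx.card := Finset.card_pos.mpr ⟨i₀, hitx⟩
    have hpy : 0 < ty.card := Finset.card_pos.mpr ⟨i₀, hity⟩
    have hsup : span K (((insert i₀ (sx ∪ sy)).biUnion X : Finset V) : Set V) ≤
        span K (((X i₀).erase x ∪ sx.biUnion X : Finset V) : Set V) ⊔
        span K (((X i₀).erase y ∪ sy.biUnion X : Finset V) : Set V) := by
      rw [span_le]
      intro v hv
      rw [Finset.coe_biUnion] at hv
      simp only [Set.mem_iUnion, Finset.mem_coe, exists_prop] at hv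
      obtain ⟨i, hi, hvi⟩ := hv
      rcases Finset.mem_insert.mp hi with rfl | hi
      · rcases eq_or_ne v x with rfl | hvx
        · apply SetLike.le_def.mp le_sup_right
          exact subset_span (by simp [Finset.mem_union, Finset.mem_erase, hxy, hvi])
        · apply SetLike.le_def.mp le_sup_left
          exact subset_span (by simp [Finset.mem_union, Finset.mem_erase, hvx, hvi])
      · rcases Finset.mem_union.mp hi with hi | hi
        · apply SetLike.le_def.mp le_sup_left
          apply subset_span
          simp only [Finset.coe_union, Set.mem_union, Finset.mem_coe, Finset.mem_biUnion]
          exact Or.inr ⟨i, hi, hvi⟩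
        · apply SetLike.le_def.mp le_sup_right
          apply subset_span
          simp only [Finset.coe_union, Set.mem_union, Finset.mem_coe, Finset.mem_biUnion]
          exact Or.inr ⟨i, hi, hvi⟩
    have hinf : span K (((sx ∩ sy).biUnion X : Finset V) : Set V) ≤
        span K (((X i₀).erase x ∪ sx.biUnion X : Finset V) : Set V) ⊓
        span K (((X i₀).erase y ∪ sy.biUnion X : Finset V) : Set V) := by
      rw [span_le]
      intro v hv
      rw [Finset.coe_biUnion] at hv
      simp only [Set.mem_iUnion, Finset.mem_coe, exists_prop] at hv
      obtain ⟨i, hi, hvi⟩ := hv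
      constructor
      · apply subset_span
        simp only [Finset.coe_union, Set.mem_union, Finset.mem_coe, Finset.mem_biUnion]
        exact Or.inr ⟨i, (Finset.mem_inter.mp hi).1, hvi⟩
      · apply subset_span
        simp only [Finset.coe_union, Set.mem_union, Finset.mem_coe, Finset.mem_biUnion]
        exact Or.inr ⟨i, (Finset.mem_inter.mp hi).2, hvi⟩
    have h1 := le_trans (hX (insert i₀ (sx ∪ sy))) (Submodule.finrank_mono hsup)
    have hni : i₀ ∉ sx ∪ sy := by
      simp [hsx, hsy, Finset.mem_union, Finset.mem_erase]
    rw [Finset.card_insert_of_notMem hni] at h1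
    have h2 := le_trans (hX (sx ∩ sy)) (Submodule.finrank_mono hinf)
    have h3 := Submodule.finrank_sup_add_finrank_inf_eq
      (span K (((X i₀).erase x ∪ sx.biUnion X : Finset V) : Set V))
      (span K (((X i₀).erase y ∪ sy.biUnion X : Finset V) : Set V))
    have h4 := Finset.card_union_add_card_inter sx sy
    omega
  · -- all cards ≤ 1; combined with nonempty, all singletons
    push_neg at hbig
    have hone : ∀ i, (X i).card = 1 := by
      intro i
      have h1 := hX {i}
      rw [Finset.singleton_biUnion, Finset.card_singleton] at h1
      have h2 : 0 < (X i).card := by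
        rcases Finset.eq_empty_or_nonempty (X i) with h | h
        · exfalso; rw [h] at h1; simp at h1
        · exact Finset.card_pos.mpr h
      have h3 := hbig i
      omega
    choose x hxX using fun i => Finset.card_eq_one.mp (hone i)
    refine ⟨x, fun i => by rw [hxX i]; exact Finset.mem_singleton_self _, ?_⟩
    rw [linearIndependent_iff_card_eq_finrank_span]
    have hrange : Set.range x = ((Finset.univ.biUnion X : Finset V) : Set V) := by
      ext v
      simp only [Set.mem_range, Finset.coe_biUnion, Finset.mem_coe, Finset.mem_univ,
        Set.mem_iUnion, exists_prop, true_and]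
      constructor
      · rintro ⟨i, rfl⟩; exact ⟨i, by simp [hxX i]⟩
      · rintro ⟨i, hi⟩; exact ⟨i, by rw [hxX i] at hi; simpa using (Finset.mem_singleton.mp hi).symm⟩
    have hle : (Set.range x).finrank K ≤ Fintype.card ι := by
      rw [Set.finrank, hrange]
      refine le_trans (finrank_span_finset_le_card _) ?_
      exact le_trans (Finset.card_biUnion_le) (by simp [hone])
    have hge : Fintype.card ι ≤ (Set.range x).finrank K := by
      have h := hX Finset.univ
      rw [Finset.card_univ] at h
      rw [Set.finrank, hrange]
      exact h
    omega

end Rado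

set_option maxHeartbeats 1000000 in
/-- If `{eᵢ}` is a basis of an infinite dimensional affine algebra `R` and
`S = {r₁, …, r_s} ⊆ R` is such that for every `l`-tuple of distinct basis elements the span of
the products `e_{i_t}·r_j` is at least `2l`-dimensional, then the basis can be partitioned into
sets `A₁, …, A_m` with elements `g₁, h₁, …, g_m, h_m ∈ S` such that the sets
`A₁g₁, A₁h₁, …, A_mg_m, A_mh_m` are mutually independent. -/
theorem paradoxical_decomposition_from_doubling (K : Type*) [Field K] (R : Type*) [Ring R]
    [Algebra K R] [Algebra.FiniteType K R]
    (hinf : ¬ FiniteDimensional K R)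
    (e : Basis ℕ K R) {s : ℕ} (r : Fin s → R)
    (hcard : ∀ t : Finset ℕ,
      2 * t.card ≤ finrank K (Submodule.span K {v : R | ∃ i ∈ t, ∃ j, v = e i * r j})) :
    ∃ (m : ℕ) (A : Fin m → Set ℕ) (g h : Fin m → Fin s),
      (⋃ i, A i) = Set.univ ∧
      Pairwise (Function.onFun Disjoint A) ∧
      LinearIndependent K (fun p : (i : Fin m) × (↥(A i) × Bool) =>
        e (p.2.1 : ℕ) * (cond p.2.2 (r (g p.1)) (r (h p.1)))) := by
  classical
  rcases Nat.eq_zero_or_pos s with rfl | hs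
  · exfalso
    have h := hcard {0}
    have hset : {v : R | ∃ i ∈ ({0} : Finset ℕ), ∃ j, v = e i * r j} = ∅ := by
      ext v
      simp
    rw [hset, Submodule.span_empty] at h
    simp [finrank_bot] at h
  haveI : Nonempty (Fin s) := ⟨⟨0, hs⟩⟩
  -- the sets of "good" assignments up to level n
  set C : ℕ → Set (ℕ → Fin s × Fin s) := fun n =>
    {f | LinearIndependent K (fun p : Fin n × Bool =>
      e (p.1 : ℕ) * r (cond p.2 (f (p.1 : ℕ)).1 (f (p.1 : ℕ)).2))} with hC
  have hCnonempty : ∀ n, (C n).Nonempty := by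
    intro n
    have hrado := rado (K := K) (V := R)
      (fun p : Fin n × Bool => Finset.image (fun j => e (p.1 : ℕ) * r j) Finset.univ) ?_
    · obtain ⟨x, hxmem, hxli⟩ := hrado
      have hj : ∀ p : Fin n × Bool, ∃ j : Fin s, x p = e (p.1 : ℕ) * r j := by
        intro p
        have hm := hxmem p
        simp only [Finset.mem_image, Finset.mem_univ, true_and] at hm
        obtain ⟨j, hjx⟩ := hm
        exact ⟨j, hjx.symm⟩
      choose j hjx using hj
      refine ⟨fun i => if h : i < n then (j (⟨i, h⟩, true), j (⟨i, h⟩, false))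
        else Classical.arbitrary _, ?_⟩
      simp only [hC, Set.mem_setOf_eq]
      have hEq : (fun p : Fin n × Bool =>
          e (p.1 : ℕ) * r (cond p.2
            ((if h : (p.1 : ℕ) < n then (j (⟨(p.1 : ℕ), h⟩, true), j (⟨(p.1 : ℕ), h⟩, false))
              else Classical.arbitrary _).1)
            ((if h : (p.1 : ℕ) < n then (j (⟨(p.1 : ℕ), h⟩, true), j (⟨(p.1 : ℕ), h⟩, false))
              else Classical.arbitrary _).2))) = x := by
        funext p
        obtain ⟨i, b⟩ := p
        have hi : (i : ℕ) < n := i.2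
        rw [dif_pos hi]
        cases b
        · simpa using (hjx (i, false)).symm
        · simpa using (hjx (i, true)).symm
      rw [hEq]
      exact hxli
    · intro t
      set u : Finset ℕ := (t.image Prod.fst).image Fin.val with hu
      have hcard1 : t.card ≤ 2 * u.card := by
        have h1 := Finset.card_le_card (show t ⊆ (t.image Prod.fst) ×ˢ (Finset.univ : Finset Bool)
          from fun p hp => Finset.mem_product.mpr ⟨Finset.mem_image_of_mem _ hp, Finset.mem_univ _⟩)
        rw [Finset.card_product, Finset.card_univ, Fintype.card_bool] at h1
        have h2 : u.card = (t.image Prod.fst).card :=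
          Finset.card_image_of_injective _ Fin.val_injective
        omega
      have hsetEq : ((t.biUnion (fun p : Fin n × Bool =>
          Finset.image (fun j => e (p.1 : ℕ) * r j) Finset.univ) : Finset R) : Set R)
          = {v : R | ∃ i ∈ u, ∃ j, v = e i * r j} := by
        ext v
        simp only [Finset.coe_biUnion, Set.mem_iUnion, Finset.mem_coe, Finset.mem_biUnion,
          Finset.mem_image, Finset.mem_univ, true_and, Set.mem_setOf_eq, hu, exists_prop]
        constructor
        · rintro ⟨p, hp, jj, rfl⟩
          exact ⟨(p.1 : ℕ), ⟨p.1, ⟨p, hp, rfl⟩, rfl⟩, jj, rfl⟩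
        · rintro ⟨i, ⟨i', ⟨p, hp, rfl⟩, rfl⟩, jj, rfl⟩
          exact ⟨p, hp, jj, rfl⟩
      calc t.card ≤ 2 * u.card := hcard1
        _ ≤ finrank K (span K {v : R | ∃ i ∈ u, ∃ j, v = e i * r j}) := hcard u
        _ = _ := by rw [hsetEq]
  letI : TopologicalSpace (Fin s × Fin s) := ⊥
  haveI : DiscreteTopology (Fin s × Fin s) := ⟨rfl⟩
  have hCclosed : ∀ n, IsClosed (C n) := by
    intro n
    have hpre : C n = (fun f : ℕ → Fin s × Fin s => (fun i : Fin n => f (i : ℕ))) ⁻¹'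
        {g : Fin n → Fin s × Fin s | LinearIndependent K (fun p : Fin n × Bool =>
          e (p.1 : ℕ) * r (cond p.2 (g p.1).1 (g p.1).2))} := rfl
    rw [hpre]
    exact (isClosed_discrete _).preimage (continuous_pi fun i => continuous_apply _)
  have hCmono : ∀ n, C (n + 1) ⊆ C n := by
    intro n f hf
    have hinj : Function.Injective
        (fun p : Fin n × Bool => ((Fin.castSucc p.1 : Fin (n + 1)), p.2)) := by
      intro p q hpq
      simp only [Prod.mk.injEq] at hpq
      exact Prod.ext (Fin.castSucc_injective _ hpq.1) hpq.2
    simp only [hC, Set.mem_setOf_eq] at hf ⊢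
    have hcomp : (fun p : Fin n × Bool =>
        e (p.1 : ℕ) * r (cond p.2 (f (p.1 : ℕ)).1 (f (p.1 : ℕ)).2))
        = (fun p : Fin (n + 1) × Bool =>
          e (p.1 : ℕ) * r (cond p.2 (f (p.1 : ℕ)).1 (f (p.1 : ℕ)).2)) ∘
          (fun p : Fin n × Bool => ((Fin.castSucc p.1 : Fin (n + 1)), p.2)) := by
      funext p
      simp [Function.comp, Fin.coe_castSucc]
    rw [hcomp]
    exact hf.comp _ hinj
  obtain ⟨f, hf⟩ := IsCompact.nonempty_iInter_of_sequence_nonempty_isCompact_isClosed C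
    hCmono hCnonempty ((hCclosed 0).isCompact) hCclosed
  rw [Set.mem_iInter] at hf
  -- global independence
  have hF : LinearIndependent K (fun p : ℕ × Bool =>
      e p.1 * r (cond p.2 (f p.1).1 (f p.1).2)) := by
    rw [linearIndependent_iff_finset_linearIndependent]
    intro t
    set n := (t.sup fun p => p.1) + 1 with hn
    have hlt : ∀ q : t, (q : ℕ × Bool).1 < n := fun q =>
      Nat.lt_succ_of_le (Finset.le_sup (f := fun p : ℕ × Bool => p.1) q.2)
    have hinj : Function.Injective
        (fun q : t => ((⟨(q : ℕ × Bool).1, hlt q⟩ : Fin n), (q : ℕ × Bool).2)) := by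
      intro q q' hqq
      simp only [Prod.mk.injEq, Fin.mk.injEq] at hqq
      exact Subtype.ext (Prod.ext hqq.1 hqq.2)
    have hfn := hf n
    simp only [hC, Set.mem_setOf_eq] at hfn
    have hcomp : ((fun p : ℕ × Bool => e p.1 * r (cond p.2 (f p.1).1 (f p.1).2)) ∘
          (Subtype.val : t → ℕ × Bool))
        = (fun p : Fin n × Bool =>
            e (p.1 : ℕ) * r (cond p.2 (f (p.1 : ℕ)).1 (f (p.1 : ℕ)).2)) ∘
          (fun q : t => ((⟨(q : ℕ × Bool).1, hlt q⟩ : Fin n), (q : ℕ × Bool).2)) := by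
      funext q
      simp [Function.comp]
    rw [hcomp]
    exact hfn.comp _ hinj
  -- packaging
  refine ⟨s * s, fun k => {i | f i = finProdFinEquiv.symm k},
    fun k => (finProdFinEquiv.symm k).1, fun k => (finProdFinEquiv.symm k).2, ?_, ?_, ?_⟩
  · ext i
    simp only [Set.mem_iUnion, Set.mem_univ, iff_true, Set.mem_setOf_eq]
    exact ⟨finProdFinEquiv (f i), by simp⟩
  · intro k k' hkk
    rw [Function.onFun, Set.disjoint_left]
    intro i hik hik'
    have h1 : f i = finProdFinEquiv.symm k := hik
    have h2 : f i = finProdFinEquiv.symm k' := hik'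
    exact hkk (finProdFinEquiv.symm.injective (h1.symm.trans h2))
  · have hφinj : Function.Injective
        (fun p : (k : Fin (s * s)) × (↥{i | f i = finProdFinEquiv.symm k} × Bool) =>
          (((p.2.1 : ℕ)), p.2.2)) := by
      rintro ⟨k, ⟨a, ha⟩, b⟩ ⟨k', ⟨a', ha'⟩, b'⟩ hpp
      simp only [Prod.mk.injEq] at hpp
      obtain ⟨h1, h2⟩ := hpp
      subst h2
      have ha2 : f a = finProdFinEquiv.symm k := ha
      have ha2' : f a' = finProdFinEquiv.symm k' := ha'
      have hk : k = k' := finProdFinEquiv.symm.injective (by rw [← ha2, ← ha2', h1])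
      subst hk
      subst h1
      rfl
    have hEq : (fun p : (k : Fin (s * s)) × (↥{i | f i = finProdFinEquiv.symm k} × Bool) =>
        e (p.2.1 : ℕ) * (cond p.2.2 (r ((finProdFinEquiv.symm p.1).1))
          (r ((finProdFinEquiv.symm p.1).2))))
        = (fun p : ℕ × Bool => e p.1 * r (cond p.2 (f p.1).1 (f p.1).2)) ∘
          (fun p : (k : Fin (s * s)) × (↥{i | f i = finProdFinEquiv.symm k} × Bool) =>
            (((p.2.1 : ℕ)), p.2.2)) := by
      funext p
      obtain ⟨k, ⟨a, ha⟩, b⟩ := p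
      have ha2 : f a = finProdFinEquiv.symm k := ha
      cases b <;> simp [Function.comp, ha2]
    rw [hEq]
    exact hF.comp _ hφinj
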